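/- arXiv:2509.16239 — 3 statements merged into one kernel-verified Lean document; each statement's English description precedes it below -/
import Mathlib

section
/- The single-step reduction relation of the Gödel Mirror system is deterministic: if Step t t1 and Step t t2, then t1 = t2. -/
inductive MirrorSystem : Type where
  | base     : MirrorSystem
  | node     : MirrorSystem → MirrorSystem
  | self_ref : MirrorSystem
  | cap      : MirrorSystem → MirrorSystem
  | enter    : MirrorSystem → MirrorSystem
  | named    : String → MirrorSystem → MirrorSystem

open MirrorSystem

def is_paradox (t : MirrorSystem) : Prop := ∃ s, t = named s self_ref

inductive Step : MirrorSystem → MirrorSystem → Prop where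
  | paradox {t} : is_paradox t → Step t (cap t)
  | integrate {t} : Step (cap t) (enter t)
  | reentry {t} : ¬ is_paradox t → Step (enter t) (node t)
  | node_rule {t} : Step (node t) (node (node t))
  | named_rule {s t t'} : Step t t' → Step (named s t) (named s t')

lemma self_ref_no_step {u : MirrorSystem} (h : Step self_ref u) : False := by
  cases h with
  | paradox hp => obtain ⟨s, hs⟩ := hp; exact absurd hs (by simp)

theorem step_deterministic {t t1 t2 : MirrorSystem}
    (h1 : Step t t1) (h2 : Step t t2) : t1 = t2 := by
  induction h1 generalizing t2 with
  | paradox hp =>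
    obtain ⟨s, rfl⟩ := hp
    cases h2 with
    | paradox _ => rfl
    | named_rule h => exact absurd h self_ref_no_step
  | integrate =>
    cases h2 with
    | paradox hp => obtain ⟨s, hs⟩ := hp; exact absurd hs (by simp)
    | integrate => rfl
  | reentry hnp =>
    cases h2 with
    | paradox hp => obtain ⟨s, hs⟩ := hp; exact absurd hs (by simp)
    | reentry _ => rfl
  | node_rule =>
    cases h2 with
    | paradox hp => obtain ⟨s, hs⟩ := hp; exact absurd hs (by simp)
    | node_rule => rfl
  | named_rule h ih =>
    cases h2 with
    | paradox hp =>
      obtain ⟨s, hs⟩ := hp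
      obtain ⟨rfl, rfl⟩ : _ ∧ _ := by simpa using hs
      exact absurd h self_ref_no_step
    | named_rule h' => rw [ih h']
end

section
/- The subterm t of a paradox is preserved through its entire resolution cycle: if is_paradox t and t reduces in k ≤ 3 steps to u, then t is a subterm of u. -/
open MirrorSystem

inductive Subterm : MirrorSystem → MirrorSystem → Prop where
  | refl (t) : Subterm t t
  | node {u t} : Subterm u t → Subterm u (node t)
  | cap {u t} : Subterm u t → Subterm u (cap t)
  | enter {u t} : Subterm u t → Subterm u (enter t)
  | named {u t} (s) : Subterm u t → Subterm u (named s t)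

def StepN : ℕ → MirrorSystem → MirrorSystem → Prop
  | 0, a, b => a = b
  | n + 1, a, c => ∃ b, Step a b ∧ StepN n b c

theorem paradox_subterm_preserved {t u : MirrorSystem} {k : ℕ}
    (hp : is_paradox t) (hk : k ≤ 3) (h : StepN k t u) : Subterm t u := by
  obtain ⟨s, rfl⟩ := hp
  interval_cases k
  · exact h ▸ Subterm.refl _
  · obtain ⟨b, hb, rfl⟩ := h
    cases hb with
    | paradox _ => exact Subterm.cap (Subterm.refl _)
    | named_rule h' => cases h' with
      | paradox hpp => obtain ⟨_, h⟩ := hpp; cases h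
  · obtain ⟨b, hb, c, hc, rfl⟩ := h
    cases hb with
    | paradox _ =>
      cases hc with
      | integrate => exact Subterm.enter (Subterm.refl _)
      | paradox hpp => obtain ⟨_, h⟩ := hpp; cases h
    | named_rule h' => cases h' with
      | paradox hpp => obtain ⟨_, h⟩ := hpp; cases h
  · obtain ⟨b, hb, c, hc, d, hd, rfl⟩ := h
    cases hb with
    | paradox _ =>
      cases hc with
      | paradox hpp => obtain ⟨_, h⟩ := hpp; cases h
      | integrate =>
        cases hd with
        | reentry hn => exact absurd ⟨s, rfl⟩ hn
        | paradox hpp => obtain ⟨_, h⟩ := hpp; cases h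
    | named_rule h' => cases h' with
      | paradox hpp => obtain ⟨_, h⟩ := hpp; cases h
end

section
/- Every infinite reduction sequence eventually consists only of node-headed terms: if f : ℕ → MirrorSystem satisfies Step (f n) (f (n+1)) for all n, and f 0 contains no named constructor anywhere, then there exists N such that for all n ≥ N, f n has head constructor node. -/
open MirrorSystem

def noNamed : MirrorSystem → Prop
  | base => True
  | self_ref => True
  | node t => noNamed t
  | cap t => noNamed t
  | enter t => noNamed t
  | named _ _ => False

def isNodeHead : MirrorSystem → Prop
  | node _ => True
  | _ => False

lemma node_head_step {t u : MirrorSystem} (h : Step t u) (ht : isNodeHead t) :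
    isNodeHead u := by
  cases h with
  | paradox hp => obtain ⟨s, hs⟩ := hp; subst hs; exact ht.elim
  | integrate => exact ht.elim
  | reentry _ => exact ht.elim
  | node_rule => trivial
  | named_rule _ => exact ht.elim

lemma enter_step {t u : MirrorSystem} (h : Step (enter t) u) : u = node t := by
  cases h with
  | paradox hp => obtain ⟨s, hs⟩ := hp; exact absurd hs (by simp)
  | reentry _ => rfl

lemma two_step {t u v : MirrorSystem} (ht : noNamed t) (h1 : Step t u)
    (h2 : Step u v) : isNodeHead v := by
  cases h1 with
  | paradox hp => obtain ⟨s, hs⟩ := hp; subst hs; exact ht.elim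
  | integrate => rw [enter_step h2]; trivial
  | reentry _ => exact node_head_step h2 trivial
  | node_rule => exact node_head_step h2 trivial
  | named_rule _ => exact ht.elim

theorem eventually_node_headed (f : ℕ → MirrorSystem)
    (hstep : ∀ n, Step (f n) (f (n + 1))) (h0 : noNamed (f 0)) :
    ∃ N, ∀ n ≥ N, isNodeHead (f n) := by
  have h2 : isNodeHead (f 2) := two_step h0 (hstep 0) (hstep 1)
  refine ⟨2, fun n hn => ?_⟩
  induction n with
  | zero => omega
  | succ m ih =>
      rcases Nat.lt_or_ge m 2 with hm | hm
      · interval_cases m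
        · omega
        · exact h2
      · exact node_head_step (hstep m) (ih hm)
end
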